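/- Let k be a field, R = k[x_1,...,x_n], and Δ : R → R ⊗_k R the algebra map with Δ(x_i) = x_i ⊗ x_i. If an ideal I ⊆ R satisfies Δ(I) ⊆ R ⊗_k I + I ⊗_k R, then I is generated by monomials and differences of two monomials (i.e., I is unital). -/

import Mathlib

open MvPolynomial TensorProduct

set_option maxHeartbeats 1000000
set_option synthInstance.maxHeartbeats 400000

lemma tmul_prod' {k : Type*} [CommSemiring k] {R : Type*} [CommSemiring R] [Algebra k R]
    {α : Type*} (s : Finset α) (p q : α → R) :
    (∏ i ∈ s, (p i ⊗ₜ[k] q i)) = (∏ i ∈ s, p i) ⊗ₜ[k] (∏ i ∈ s, q i) := by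
  classical
  induction s using Finset.induction with
  | empty => simp [Algebra.TensorProduct.one_def]
  | insert _ _ hx ih =>
    rw [Finset.prod_insert hx, ih, Finset.prod_insert hx, Finset.prod_insert hx,
      Algebra.TensorProduct.tmul_mul_tmul]

lemma delta_monomial {k : Type*} [CommSemiring k] {n : ℕ} (a : Fin n →₀ ℕ) :
    aeval (fun i => (X i : MvPolynomial (Fin n) k) ⊗ₜ[k] X i) (monomial a (1:k))
      = monomial a (1:k) ⊗ₜ[k] monomial a (1:k) := by
  rw [aeval_monomial, map_one, one_mul, Finsupp.prod]
  simp only [Algebra.TensorProduct.tmul_pow]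
  rw [tmul_prod']
  rw [monomial_eq, map_one, one_mul, Finsupp.prod]

lemma key_reduced {k : Type*} [Field k] {n : ℕ} (I : Ideal (MvPolynomial (Fin n) k))
    (hco : ∀ f ∈ I, (Algebra.TensorProduct.map (Ideal.Quotient.mkₐ k I) (Ideal.Quotient.mkₐ k I))
      (aeval (fun i => (X i : MvPolynomial (Fin n) k) ⊗ₜ[k] X i) f) = 0) :
    ∀ m : ℕ, ∀ f : MvPolynomial (Fin n) k, f ∈ I → f.support.card ≤ m →
      (∀ a ∈ f.support, monomial a (1:k) ∉ I) →
      (∀ a ∈ f.support, ∀ b ∈ f.support, a ≠ b → monomial a (1:k) - monomial b 1 ∉ I) →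
      f = 0 := by
  classical
  intro m
  induction m with
  | zero =>
    intro f _ hc _ _
    rw [← support_eq_empty, ← Finset.card_eq_zero]
    exact Nat.le_zero.mp hc
  | succ m ih =>
    intro f hfI hcard hred1 hred2
    by_contra hf0
    have hsne : f.support.Nonempty := by rwa [support_nonempty]
    set π := Ideal.Quotient.mkₐ k I with hπ
    set v : (Fin n →₀ ℕ) → (MvPolynomial (Fin n) k ⧸ I) := fun c => π (monomial c 1) with hv
    have hf := support_sum_monomial_coeff f
    rcases Nat.lt_or_ge f.support.card 2 with hlt | hge
    · -- card = 1
      have hc1 : f.support.card = 1 := by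
        have := Finset.card_pos.mpr hsne
        omega
      obtain ⟨a, ha⟩ := Finset.card_eq_one.mp hc1
      have haf : a ∈ f.support := by rw [ha]; exact Finset.mem_singleton_self a
      have hfe : f = monomial a (coeff a f) := by
        conv_lhs => rw [← hf]
        rw [ha, Finset.sum_singleton]
      have hmem : monomial a (1:k) ∈ I := by
        have hc0 : coeff a f ≠ 0 := mem_support_iff.mp haf
        set cf := coeff a f with hcf
        have h2 : C cf⁻¹ * f ∈ I := Ideal.mul_mem_left I _ hfI
        rwa [hfe, C_mul_monomial, inv_mul_cancel₀ hc0] at h2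
      exact hred1 a haf hmem
    · -- card ≥ 2
      obtain ⟨a, haf, b, hbf, hab⟩ := Finset.one_lt_card.mp hge
      have h0 := hco f hfI
      have hterm : ∀ c, (Algebra.TensorProduct.map π π)
          (aeval (fun i => (X i : MvPolynomial (Fin n) k) ⊗ₜ[k] X i) (monomial c (coeff c f)))
          = coeff c f • (v c ⊗ₜ[k] v c) := by
        intro c
        have h1 : monomial c (coeff c f) = coeff c f • monomial c (1:k) := by
          rw [smul_monomial, smul_eq_mul, mul_one]
        rw [h1, map_smul, delta_monomial, map_smul, Algebra.TensorProduct.map_tmul]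
      have hsum : ∑ c ∈ f.support, coeff c f • (v c ⊗ₜ[k] v c) = 0 := by
        rw [← h0]
        conv_rhs => rw [← hf]
        rw [map_sum, map_sum]
        exact Finset.sum_congr rfl fun c _ => (hterm c).symm
      have hπf : ∑ c ∈ f.support, coeff c f • v c = 0 := by
        have : π f = 0 := by
          simp only [hπ, Ideal.Quotient.mkₐ_eq_mk]
          exact Ideal.Quotient.eq_zero_iff_mem.mpr hfI
        rw [← this]
        conv_rhs => rw [← hf]
        rw [map_sum]
        refine Finset.sum_congr rfl fun c _ => ?_
        rw [show monomial c (coeff c f) = coeff c f • monomial c (1:k) by rw [smul_monomial, smul_eq_mul, mul_one],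
          map_smul]
      have hφ : ∀ φ : Module.Dual k (MvPolynomial (Fin n) k ⧸ I), φ (v a) = φ (v b) := by
        intro φ
        set F : (MvPolynomial (Fin n) k ⧸ I) ⊗[k] (MvPolynomial (Fin n) k ⧸ I) →ₗ[k]
            (MvPolynomial (Fin n) k ⧸ I) :=
          (TensorProduct.lid k (MvPolynomial (Fin n) k ⧸ I)).toLinearMap ∘ₗ
            (LinearMap.rTensor (MvPolynomial (Fin n) k ⧸ I) φ) with hFdef
        have hF2 : ∀ x y, F (x ⊗ₜ[k] y) = φ x • y := fun x y => by
          rw [hFdef, LinearMap.coe_comp, Function.comp_apply, LinearMap.rTensor_tmul,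
            LinearEquiv.coe_coe, TensorProduct.lid_tmul]
        have h2 : ∑ c ∈ f.support, (coeff c f * φ (v c)) • v c = 0 := by
          have hc := congrArg F hsum
          rw [map_zero, map_sum] at hc
          rw [← hc]
          refine Finset.sum_congr rfl fun c _ => ?_
          rw [map_smul, hF2, smul_smul]
        set h : MvPolynomial (Fin n) k :=
          ∑ c ∈ f.support, ((φ (v a) - φ (v c)) * coeff c f) • monomial c (1:k) with hh
        have hπh : π h = 0 := by
          rw [hh, map_sum]
          have e0 : ∀ c ∈ f.support,
              π (((φ (v a) - φ (v c)) * coeff c f) • monomial c (1:k))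
              = (φ (v a) * coeff c f) • v c - (coeff c f * φ (v c)) • v c := by
            intro c _
            rw [map_smul, sub_mul, sub_smul, mul_comm (φ (v c)) (coeff c f)]
          rw [Finset.sum_congr rfl e0, Finset.sum_sub_distrib]
          have e1 : ∑ c ∈ f.support, (φ (v a) * coeff c f) • v c = 0 := by
            have : ∑ c ∈ f.support, (φ (v a) * coeff c f) • v c
                = φ (v a) • ∑ c ∈ f.support, coeff c f • v c := by
              rw [Finset.smul_sum]
              exact Finset.sum_congr rfl fun c _ => (smul_smul _ _ _).symm
            rw [this, hπf, smul_zero]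
          rw [e1, h2, sub_zero]
        have hhI : h ∈ I := by
          rw [hπ, Ideal.Quotient.mkₐ_eq_mk] at hπh
          exact Ideal.Quotient.eq_zero_iff_mem.mp hπh
        have hcoeffh : ∀ d, coeff d h
            = if d ∈ f.support then (φ (v a) - φ (v d)) * coeff d f else 0 := by
          intro d
          rw [hh, coeff_sum]
          simp only [coeff_smul, coeff_monomial, smul_eq_mul, mul_ite, mul_one, mul_zero]
          rw [Finset.sum_ite_eq' f.support d fun c => (φ (v a) - φ (v c)) * coeff c f]
        have hsub : h.support ⊆ f.support.erase a := by
          intro d hd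
          rw [mem_support_iff, hcoeffh d] at hd
          rw [Finset.mem_erase]
          by_cases hdf : d ∈ f.support
          · refine ⟨?_, hdf⟩
            rintro rfl
            simp [hdf] at hd
          · simp [hdf] at hd
        have hzero : h = 0 := by
          refine ih h hhI ?_ (fun c hc => hred1 c (Finset.mem_of_mem_erase (hsub hc)))
            (fun c hc d hd hcd => hred2 c (Finset.mem_of_mem_erase (hsub hc))
              d (Finset.mem_of_mem_erase (hsub hd)) hcd)
          have := Finset.card_le_card hsub
          rw [Finset.card_erase_of_mem haf] at this
          omega
        have hb := hcoeffh b
        rw [hzero, coeff_zero, if_pos hbf] at hb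
        have hcb : coeff b f ≠ 0 := mem_support_iff.mp hbf
        exact sub_eq_zero.mp ((mul_eq_zero.mp hb.symm).resolve_right hcb)
      have hvab : v a = v b := by
        have : v a - v b = 0 := by
          rw [← Module.forall_dual_apply_eq_zero_iff k]
          intro φ
          rw [map_sub, hφ φ, sub_self]
        exact sub_eq_zero.mp this
      exact hred2 a haf b hbf hab (by
        have : π (monomial a (1:k) - monomial b 1) = 0 := by
          rw [map_sub]
          exact sub_eq_zero.mpr hvab
        rw [hπ, Ideal.Quotient.mkₐ_eq_mk] at this
        exact Ideal.Quotient.eq_zero_iff_mem.mp this)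


/-- An ideal of `k[x₁,…,xₙ]` is unital if it is generated by monomials and differences of
two monomials. -/
def IsUnital {k : Type*} [Field k] {n : ℕ} (I : Ideal (MvPolynomial (Fin n) k)) : Prop :=
  ∃ B : Set (MvPolynomial (Fin n) k), I = Ideal.span B ∧
    ∀ f ∈ B, (∃ a : Fin n →₀ ℕ, f = monomial a 1) ∨
      (∃ a b : Fin n →₀ ℕ, f = monomial a 1 - monomial b 1)

/-- If an ideal `I ⊆ k[x₁,…,xₙ]` is a coideal for the comultiplication `Δ` with
`Δ(xᵢ) = xᵢ ⊗ xᵢ`, i.e. `Δ(I) ⊆ k[x] ⊗ I + I ⊗ k[x]`, then `I` is unital (generated by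
monomials and differences of two monomials). -/
theorem stmt7 {k : Type*} [Field k] {n : ℕ} (I : Ideal (MvPolynomial (Fin n) k))
    (Δ : MvPolynomial (Fin n) k →ₐ[k] MvPolynomial (Fin n) k ⊗[k] MvPolynomial (Fin n) k)
    (hΔ : Δ = aeval (fun i => (X i : MvPolynomial (Fin n) k) ⊗ₜ[k] (X i)))
    (hcoideal : ∀ f ∈ I, Δ f ∈
      I.map (Algebra.TensorProduct.includeLeft :
          MvPolynomial (Fin n) k →ₐ[k] MvPolynomial (Fin n) k ⊗[k] MvPolynomial (Fin n) k) ⊔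
      I.map (Algebra.TensorProduct.includeRight :
          MvPolynomial (Fin n) k →ₐ[k] MvPolynomial (Fin n) k ⊗[k] MvPolynomial (Fin n) k)) :
    IsUnital I := by
  classical
  have hco : ∀ f ∈ I, (Algebra.TensorProduct.map (Ideal.Quotient.mkₐ k I) (Ideal.Quotient.mkₐ k I))
      (aeval (fun i => (X i : MvPolynomial (Fin n) k) ⊗ₜ[k] X i) f) = 0 := by
    intro f hf
    have hmem := hcoideal f hf
    rw [hΔ] at hmem
    have hker : I.map (Algebra.TensorProduct.includeLeft :
          MvPolynomial (Fin n) k →ₐ[k] MvPolynomial (Fin n) k ⊗[k] MvPolynomial (Fin n) k) ⊔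
        I.map (Algebra.TensorProduct.includeRight :
          MvPolynomial (Fin n) k →ₐ[k] MvPolynomial (Fin n) k ⊗[k] MvPolynomial (Fin n) k) ≤
        RingHom.ker (Algebra.TensorProduct.map (Ideal.Quotient.mkₐ k I)
          (Ideal.Quotient.mkₐ k I)).toRingHom := by
      refine sup_le ?_ ?_ <;> rw [Ideal.map_le_iff_le_comap] <;> intro g hg <;>
        rw [Ideal.mem_comap, RingHom.mem_ker]
      · show (Algebra.TensorProduct.map (Ideal.Quotient.mkₐ k I) (Ideal.Quotient.mkₐ k I))
          (g ⊗ₜ[k] 1) = 0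
        rw [Algebra.TensorProduct.map_tmul]
        rw [show (Ideal.Quotient.mkₐ k I) g = 0 by
          rw [Ideal.Quotient.mkₐ_eq_mk]; exact Ideal.Quotient.eq_zero_iff_mem.mpr hg]
        rw [TensorProduct.zero_tmul]
      · show (Algebra.TensorProduct.map (Ideal.Quotient.mkₐ k I) (Ideal.Quotient.mkₐ k I))
          ((1 : MvPolynomial (Fin n) k) ⊗ₜ[k] g) = 0
        rw [Algebra.TensorProduct.map_tmul]
        rw [show (Ideal.Quotient.mkₐ k I) g = 0 by
          rw [Ideal.Quotient.mkₐ_eq_mk]; exact Ideal.Quotient.eq_zero_iff_mem.mpr hg]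
        rw [TensorProduct.tmul_zero]
    exact RingHom.mem_ker.mp (hker hmem)
  set B : Set (MvPolynomial (Fin n) k) :=
    {f | f ∈ I ∧ ((∃ a, f = monomial a 1) ∨ ∃ a b, f = monomial a 1 - monomial b 1)} with hB
  refine ⟨B, ?_, fun f hf => hf.2⟩
  have hBI : Ideal.span B ≤ I := Ideal.span_le.mpr fun f hf => hf.1
  have main : ∀ m : ℕ, ∀ f ∈ I, f.support.card ≤ m → f ∈ Submodule.span k B := by
    intro m
    induction m with
    | zero =>
      intro f hf hc
      have : f = 0 := by
        rw [← support_eq_empty, ← Finset.card_eq_zero]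
        exact Nat.le_zero.mp hc
      rw [this]
      exact zero_mem _
    | succ m ih =>
      intro f hf hcard
      by_cases hcase1 : ∃ a ∈ f.support, monomial a (1:k) ∈ I
      · obtain ⟨a, haf, haI⟩ := hcase1
        set f' := f - coeff a f • monomial a (1:k) with hf'
        have hf'I : f' ∈ I := by
          refine Ideal.sub_mem I hf ?_
          rw [smul_eq_C_mul]
          exact Ideal.mul_mem_left I _ haI
        have hsupp : f'.support ⊆ f.support.erase a := by
          intro d hd
          rw [mem_support_iff, hf', coeff_sub, coeff_smul, coeff_monomial] at hd
          rw [Finset.mem_erase, mem_support_iff]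
          by_cases hda : d = a
          · subst hda
            simp at hd
          · refine ⟨hda, fun h0 => ?_⟩
            simp [Ne.symm hda, h0] at hd
        have hcard' : f'.support.card ≤ m := by
          have := Finset.card_le_card hsupp
          rw [Finset.card_erase_of_mem haf] at this
          omega
        have hmem' := ih f' hf'I hcard'
        have hBmem : monomial a (1:k) ∈ Submodule.span k B :=
          Submodule.subset_span ⟨haI, Or.inl ⟨a, rfl⟩⟩
        have hfeq : f = f' + coeff a f • monomial a (1:k) := by rw [hf']; ring
        rw [hfeq]
        exact Submodule.add_mem _ hmem' (Submodule.smul_mem _ _ hBmem)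
      · by_cases hcase2 : ∃ a ∈ f.support, ∃ b ∈ f.support, a ≠ b ∧
            monomial a (1:k) - monomial b 1 ∈ I
        · obtain ⟨a, haf, b, hbf, hab, habI⟩ := hcase2
          set f' := f - coeff a f • (monomial a (1:k) - monomial b 1) with hf'
          have hf'I : f' ∈ I := by
            refine Ideal.sub_mem I hf ?_
            rw [smul_eq_C_mul]
            exact Ideal.mul_mem_left I _ habI
          have hsupp : f'.support ⊆ f.support.erase a := by
            intro d hd
            rw [mem_support_iff, hf', coeff_sub, coeff_smul, coeff_sub, coeff_monomial,
              coeff_monomial] at hd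
            rw [Finset.mem_erase, mem_support_iff]
            by_cases hda : d = a
            · subst hda
              simp [Ne.symm hab] at hd
            · refine ⟨hda, fun h0 => ?_⟩
              by_cases hdb : d = b
              · subst hdb
                exact mem_support_iff.mp hbf h0
              · simp [Ne.symm hda, Ne.symm hdb, h0] at hd
          have hcard' : f'.support.card ≤ m := by
            have := Finset.card_le_card hsupp
            rw [Finset.card_erase_of_mem haf] at this
            omega
          have hmem' := ih f' hf'I hcard'
          have hBmem : monomial a (1:k) - monomial b 1 ∈ Submodule.span k B :=
            Submodule.subset_span ⟨habI, Or.inr ⟨a, b, rfl⟩⟩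
          have hfeq : f = f' + coeff a f • (monomial a (1:k) - monomial b 1) := by
            rw [hf']; ring
          rw [hfeq]
          exact Submodule.add_mem _ hmem' (Submodule.smul_mem _ _ hBmem)
        · push_neg at hcase1 hcase2
          have hzero : f = 0 :=
            key_reduced I hco f.support.card f hf le_rfl hcase1
              (fun a ha b hb hab => hcase2 a ha b hb hab)
          rw [hzero]
          exact zero_mem _
  refine le_antisymm (fun f hf => ?_) hBI
  have hm := main f.support.card f hf le_rfl
  have hle : Submodule.span k B ≤ Submodule.restrictScalars k (Ideal.span B) :=
    Submodule.span_le.mpr fun x hx => Ideal.subset_span hx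
  exact hle hm
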